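/- Let K be a subfield of a fixed algebraic closure of ℚ with [K : ℚ] = d finite, let h ∈ K, let α be an element of this algebraic closure with α² = h, and let L = K(α). Then the normal closure L' of L over ℚ (inside the algebraic closure) satisfies [L' : ℚ] ≤ 2^d · d!. -/

import Mathlib

open Polynomial IntermediateField Module

theorem aux_splitbound (p : Polynomial ℚ) (hp : p.Separable) :
    finrank ℚ p.SplittingField ≤ Nat.factorial p.natDegree := by
  classical
  have : Fact ((p.map (algebraMap ℚ p.SplittingField)).Splits) := ⟨SplittingField.splits p⟩
  calc finrank ℚ p.SplittingField = Fintype.card p.Gal := by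
        rw [← Nat.card_eq_fintype_card]; exact (Polynomial.Gal.card_of_separable hp).symm
    _ ≤ Fintype.card (Equiv.Perm (p.rootSet p.SplittingField)) :=
        Fintype.card_le_of_injective _ (Polynomial.Gal.galActionHom_injective p _)
    _ = Nat.factorial (Fintype.card (p.rootSet p.SplittingField)) := Fintype.card_perm
    _ ≤ Nat.factorial p.natDegree := Nat.factorial_le (by
        exact le_of_eq (by convert Polynomial.card_rootSet_eq_natDegree hp (SplittingField.splits p) <;> rfl))

theorem aux_sup {F A' : Type*} [Field F] [Field A'] [Algebra F A'] {ι : Type*}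
    (g : ι → IntermediateField F A')
    (hg : ∀ i, FiniteDimensional F (g i) ∧ finrank F (g i) ≤ 2) (s : Finset ι) :
    FiniteDimensional F ↥(s.sup g) ∧ finrank F ↥(s.sup g) ≤ 2 ^ s.card := by
  classical
  induction s using Finset.induction with
  | empty =>
      rw [Finset.sup_empty]
      exact ⟨by infer_instance, by simp [IntermediateField.finrank_bot]⟩
  | insert _ _ ha ih =>
      rename_i a s
      rw [Finset.sup_insert, Finset.card_insert_of_notMem ha]
      haveI := (hg a).1
      haveI := ih.1
      refine ⟨IntermediateField.finiteDimensional_sup _ _, ?_⟩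
      calc finrank F ↥(g a ⊔ s.sup g) ≤ finrank F (g a) * finrank F ↥(s.sup g) :=
            IntermediateField.finrank_sup_le _ _
        _ ≤ 2 * 2 ^ s.card := Nat.mul_le_mul (hg a).2 ih.2
        _ = 2 ^ (s.card + 1) := by ring

set_option maxHeartbeats 1000000 in
theorem stmt13 (K : IntermediateField ℚ (AlgebraicClosure ℚ))
    [FiniteDimensional ℚ K] (d : ℕ) (hd : d = Module.finrank ℚ K)
    (h α : AlgebraicClosure ℚ) (hh : h ∈ K) (hα : α ^ 2 = h) :
    Module.finrank ℚ
        (normalClosure ℚ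
          (↥(K ⊔ IntermediateField.adjoin ℚ {α}))
          (AlgebraicClosure ℚ))
      ≤ 2 ^ d * Nat.factorial d := by
  classical
  obtain ⟨θ, hθ⟩ := Field.exists_primitive_element ℚ K
  have hθint : IsIntegral ℚ θ := Algebra.IsIntegral.isIntegral θ
  set p := minpoly ℚ θ with hp
  have hpd : p.natDegree = d := by
    rw [hd, hp, ← IntermediateField.adjoin.finrank hθint, hθ, IntermediateField.finrank_top']
  set N : IntermediateField ℚ (AlgebraicClosure ℚ) := adjoin ℚ (p.rootSet (AlgebraicClosure ℚ)) with hN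
  have hNsplit : IsSplittingField ℚ N p :=
    adjoin_rootSet_isSplittingField (IsAlgClosed.splits _)
  haveI hNfin : FiniteDimensional ℚ N := IsSplittingField.finiteDimensional N p
  have hsep : p.Separable := (minpoly.irreducible hθint).separable
  have hNle : finrank ℚ N ≤ Nat.factorial d := by
    calc finrank ℚ N = finrank ℚ p.SplittingField :=
          (IsSplittingField.algEquiv ↥N p).toLinearEquiv.finrank_eq
      _ ≤ Nat.factorial p.natDegree := aux_splitbound p hsep
      _ = Nat.factorial d := by rw [hpd]
  -- embeddings of K land in N
  have hrange : ∀ τ : K →ₐ[ℚ] (AlgebraicClosure ℚ), τ.fieldRange ≤ N := by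
    intro τ
    rw [τ.fieldRange_eq_map, ← hθ, adjoin_map, Set.image_singleton]
    apply IntermediateField.adjoin.mono
    intro x hx
    rw [Set.mem_singleton_iff] at hx
    subst hx
    rw [Polynomial.mem_rootSet]
    refine ⟨minpoly.ne_zero hθint, ?_⟩
    rw [Polynomial.aeval_algHom_apply, minpoly.aeval, map_zero]
  have hKN : K ≤ N := by
    have := hrange K.val
    exact le_trans (le_of_eq (fieldRange_val K).symm) this
  -- choose square roots of conjugates of h
  have hr : ∀ τ : K →ₐ[ℚ] (AlgebraicClosure ℚ), ∃ z : (AlgebraicClosure ℚ), z ^ 2 = τ ⟨h, hh⟩ :=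
    fun τ => IsAlgClosed.exists_pow_nat_eq _ two_pos
  choose r hr2 using hr
  have hrN : ∀ τ : K →ₐ[ℚ] (AlgebraicClosure ℚ), (r τ) ^ 2 ∈ N := by
    intro τ
    rw [hr2]
    exact hrange τ ⟨⟨h, hh⟩, rfl⟩
  set g : (K →ₐ[ℚ] (AlgebraicClosure ℚ)) → IntermediateField ↥N (AlgebraicClosure ℚ) := fun τ => adjoin ↥N {r τ} with hg
  have hgprop : ∀ τ, FiniteDimensional ↥N (g τ) ∧ finrank ↥N (g τ) ≤ 2 := by
    intro τ
    have hint : IsIntegral ↥N (r τ) := by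
      refine ⟨X ^ 2 - C (⟨(r τ) ^ 2, hrN τ⟩ : ↥N), monic_X_pow_sub_C _ two_ne_zero, ?_⟩
      simp [Polynomial.eval₂_sub, Polynomial.eval₂_pow]
    refine ⟨adjoin.finiteDimensional hint, ?_⟩
    rw [adjoin.finrank hint]
    have hmin := minpoly.min (A := ↥N) (x := r τ)
      (p := X ^ 2 - C (⟨(r τ) ^ 2, hrN τ⟩ : ↥N)) (monic_X_pow_sub_C _ two_ne_zero)
      (by simp)
    have hdeg : (X ^ 2 - C (⟨(r τ) ^ 2, hrN τ⟩ : ↥N)).degree = 2 :=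
      Polynomial.degree_X_pow_sub_C (by norm_num) _
    rw [hdeg] at hmin
    exact Polynomial.natDegree_le_iff_degree_le.mpr (by exact_mod_cast hmin)
  obtain ⟨hEfd, hEle⟩ := aux_sup g hgprop Finset.univ
  set E : IntermediateField ↥N (AlgebraicClosure ℚ) := Finset.univ.sup g with hE
  have hcard : Fintype.card (K →ₐ[ℚ] (AlgebraicClosure ℚ)) = d := by rw [AlgHom.card, hd]
  set M : IntermediateField ℚ (AlgebraicClosure ℚ) := E.restrictScalars ℚ with hM
  have hNM : N ≤ M := by
    intro x hx
    have : algebraMap ↥N (AlgebraicClosure ℚ) ⟨x, hx⟩ ∈ (⊥ : IntermediateField ↥N (AlgebraicClosure ℚ)) :=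
      IntermediateField.algebraMap_mem _ _
    exact (bot_le : (⊥ : IntermediateField ↥N (AlgebraicClosure ℚ)) ≤ E) this
  have hrM : ∀ τ, r τ ∈ M := fun τ =>
    (Finset.le_sup (Finset.mem_univ τ) : g τ ≤ E) (mem_adjoin_simple_self ↥N (r τ))
  set L : IntermediateField ℚ (AlgebraicClosure ℚ) := K ⊔ adjoin ℚ {α} with hL
  have hL'M : normalClosure ℚ ↥L (AlgebraicClosure ℚ) ≤ M := by
    rw [normalClosure_le_iff]
    intro ρ
    set τ := ρ.comp (inclusion (le_sup_left : K ≤ L)) with hτ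
    rintro x ⟨y, rfl⟩
    have hαL : α ∈ L := (le_sup_right : adjoin ℚ {α} ≤ L) (mem_adjoin_simple_self ℚ α)
    have hρα : ρ ⟨α, hαL⟩ ∈ M := by
      have hsq : (⟨α, hαL⟩ : ↥L) ^ 2 = inclusion (le_sup_left : K ≤ L) ⟨h, hh⟩ :=
        Subtype.ext (by push_cast; simpa using hα)
      have h1 : (ρ ⟨α, hαL⟩) ^ 2 = (r τ) ^ 2 := by
        rw [← map_pow, hsq]
        exact (hr2 τ).symm
      have h2 : (ρ ⟨α, hαL⟩ - r τ) * (ρ ⟨α, hαL⟩ + r τ) = 0 := by linear_combination h1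
      rcases mul_eq_zero.mp h2 with h3 | h3
      · rw [sub_eq_zero] at h3
        rw [h3]; exact hrM τ
      · have h4 : ρ ⟨α, hαL⟩ = -(r τ) := eq_neg_of_add_eq_zero_left h3
        rw [h4]; exact M.neg_mem (hrM τ)
    have hLeq : adjoin ℚ ((K : Set (AlgebraicClosure ℚ)) ∪ {α}) = L := by
      rw [adjoin_union, adjoin_self]
    have key : ∀ z (hz : z ∈ adjoin ℚ ((K : Set (AlgebraicClosure ℚ)) ∪ {α})),
        ∀ hzL : z ∈ L, ρ ⟨z, hzL⟩ ∈ M := by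
      intro z hz
      induction hz using IntermediateField.adjoin_induction with
      | mem x hx =>
          intro hzL
          rcases hx with hx | hx
          · have : ρ ⟨x, hzL⟩ = τ ⟨x, hx⟩ := rfl
            rw [this]
            exact hNM (hrange τ ⟨⟨x, hx⟩, rfl⟩)
          · rw [Set.mem_singleton_iff] at hx
            subst hx
            exact hρα
      | algebraMap x =>
          intro hzL
          have : (⟨algebraMap ℚ (AlgebraicClosure ℚ) x, hzL⟩ : ↥L) = algebraMap ℚ ↥L x := rfl
          rw [this, AlgHom.commutes]
          exact M.algebraMap_mem x
      | add x y hx hy ihx ihy =>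
          intro hzL
          have hxL : x ∈ L := hLeq ▸ hx
          have hyL : y ∈ L := hLeq ▸ hy
          have : (⟨x + y, hzL⟩ : ↥L) = ⟨x, hxL⟩ + ⟨y, hyL⟩ := rfl
          rw [this, map_add]
          exact M.add_mem (ihx hxL) (ihy hyL)
      | inv x hx ihx =>
          intro hzL
          have hxL : x ∈ L := hLeq ▸ hx
          have : (⟨x⁻¹, hzL⟩ : ↥L) = (⟨x, hxL⟩ : ↥L)⁻¹ := Subtype.ext (by rw [IntermediateField.coe_inv])
          rw [this, map_inv₀]
          exact M.inv_mem (ihx hxL)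
      | mul x y hx hy ihx ihy =>
          intro hzL
          have hxL : x ∈ L := hLeq ▸ hx
          have hyL : y ∈ L := hLeq ▸ hy
          have : (⟨x * y, hzL⟩ : ↥L) = ⟨x, hxL⟩ * ⟨y, hyL⟩ := rfl
          rw [this, map_mul]
          exact M.mul_mem (ihx hxL) (ihy hyL)
    have hyL : ↑y ∈ adjoin ℚ ((K : Set (AlgebraicClosure ℚ)) ∪ {α}) := by
      rw [hLeq]; exact y.2
    have := key ↑y hyL y.2
    simpa using this
  -- conclude
  haveI hEfd' : FiniteDimensional ℚ ↥E := Module.Finite.trans ↥N ↥E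
  haveI hMfd : FiniteDimensional ℚ ↥M := hEfd'
  haveI : Module.Finite ℚ ↥(Subalgebra.toSubmodule M.toSubalgebra) := hMfd
  have hmono : finrank ℚ (normalClosure ℚ ↥L (AlgebraicClosure ℚ)) ≤ finrank ℚ ↥M :=
    Submodule.finrank_mono (s := (normalClosure ℚ ↥L (AlgebraicClosure ℚ)).toSubmodule)
      (t := M.toSubmodule) (fun x hx => hL'M hx)
  have htower : finrank ℚ ↥N * finrank ↥N ↥E = finrank ℚ ↥E :=
    Module.finrank_mul_finrank ℚ ↥N ↥E
  have hME : finrank ℚ ↥M = finrank ℚ ↥E := rfl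
  calc finrank ℚ (normalClosure ℚ ↥L (AlgebraicClosure ℚ)) ≤ finrank ℚ ↥M := hmono
    _ = finrank ℚ ↥N * finrank ↥N ↥E := by rw [hME, ← htower]
    _ ≤ Nat.factorial d * 2 ^ d := by
        apply Nat.mul_le_mul hNle
        calc finrank ↥N ↥E ≤ 2 ^ Finset.univ.card := hEle
          _ = 2 ^ d := by rw [Finset.card_univ, hcard]
    _ = 2 ^ d * Nat.factorial d := Nat.mul_comm _ _
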